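/- Let v : [0, x̄] → ℝ, x̄ ∈ (0,1), be twice continuously differentiable in a neighborhood of x̄ with v(x̄) > x̄, hence v''(x̄) = r√(2c)·√(v(x̄) − x̄) > 0, where v satisfies r(v(x) − x) = b(x)·v''(x) + (1/(2rc))(v''(x)₊)² for x ≥ x̄ near x̄, with b continuous, b(x̄) = 0, b differentiable on (x̄, 1] and (b(x̄ + ε) − b(x̄))/ε → +∞ as ε ↓ 0. If additionally v is three times continuously differentiable near x̄, then a contradiction arises; hence v(x̄) ≤ x̄. -/

import Mathlib

open Set Filter

/-- Deterrence construction: if b vanishes at x̄ with infinite right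
derivative and v is smooth near x̄ with v(x̄) > x̄ satisfying the HJB to the
right of x̄, a contradiction arises (hence v(x̄) ≤ x̄). -/
theorem stmt16 (v b : ℝ → ℝ) (r c xbar : ℝ)
    (hr : 0 < r) (hc : 0 < c) (hxbar : xbar ∈ Ioo (0:ℝ) 1)
    (hC3 : ∃ δ > 0, ContDiffOn ℝ 3 v (Icc (xbar - δ) (xbar + δ)))
    (hvgt : v xbar > xbar)
    (h2 : deriv (deriv v) xbar = r * Real.sqrt (2*c) * Real.sqrt (v xbar - xbar))
    (hode : ∃ δ > 0, ∀ x ∈ Icc xbar (xbar + δ),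
      r * (v x - x) = b x * deriv (deriv v) x
        + (1/(2*r*c)) * (max (deriv (deriv v) x) 0)^2)
    (hbcont : ContinuousOn b (Icc 0 1))
    (hbxbar : b xbar = 0)
    (hbdiff : ∀ x ∈ Ioc xbar 1, DifferentiableAt ℝ b x)
    (hbblow : Tendsto (fun ε => (b (xbar + ε) - b xbar) / ε)
      (nhdsWithin 0 (Ioi 0)) atTop) :
    False := by
  obtain ⟨δ₁, hδ₁, hC3⟩ := hC3
  obtain ⟨δ₂, hδ₂, hode⟩ := hode
  have hd0 : 0 < v xbar - xbar := by linarith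
  have hsq2c : Real.sqrt (2*c) ^ 2 = 2*c := Real.sq_sqrt (by positivity)
  have hsqd : Real.sqrt (v xbar - xbar) ^ 2 = v xbar - xbar := Real.sq_sqrt hd0.le
  have hv2pos : 0 < deriv (deriv v) xbar := by
    rw [h2]
    have : 0 < Real.sqrt (2*c) := Real.sqrt_pos.mpr (by positivity)
    have : 0 < Real.sqrt (v xbar - xbar) := Real.sqrt_pos.mpr hd0
    positivity
  -- smoothness of deriv deriv v on the open interval
  set s := Ioo (xbar - δ₁) (xbar + δ₁) with hs
  have hsopen : IsOpen s := isOpen_Ioo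
  have hmem : xbar ∈ s := ⟨by linarith, by linarith⟩
  have hsnhds : s ∈ nhds xbar := hsopen.mem_nhds hmem
  have hopen : ContDiffOn ℝ 3 v s := hC3.mono Ioo_subset_Icc_self
  have hdv : ContDiffOn ℝ 2 (deriv v) s := hopen.deriv_of_isOpen hsopen (by norm_num)
  have hddv : ContDiffOn ℝ 1 (deriv (deriv v)) s := hdv.deriv_of_isOpen hsopen (by norm_num)
  have hv2diff : DifferentiableAt ℝ (deriv (deriv v)) xbar :=
    ((hddv.differentiableOn (by norm_num)).differentiableAt hsnhds)
  have hv2cont : ContinuousAt (deriv (deriv v)) xbar := hv2diff.continuousAt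
  have hvdiff : DifferentiableAt ℝ v xbar :=
    ((hopen.differentiableOn (by norm_num)).differentiableAt hsnhds)
  -- the auxiliary function g
  set g : ℝ → ℝ := fun x => r * (v x - x) - (1/(2*r*c)) * (deriv (deriv v) x)^2 with hg
  have hgdiff : DifferentiableAt ℝ g xbar := by
    apply DifferentiableAt.sub
    · exact (hvdiff.sub differentiableAt_id).const_mul r
    · exact ((hv2diff.pow 2)).const_mul _
  have hg0 : g xbar = 0 := by
    have key : (deriv (deriv v) xbar)^2 = r^2 * (2*c) * (v xbar - xbar) := by
      rw [h2, mul_pow, mul_pow, hsq2c, hsqd]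
    simp only [hg]
    rw [key]
    field_simp
    ring
  -- maps into the right neighborhoods
  have hmap0 : Tendsto (fun ε : ℝ => xbar + ε) (nhdsWithin 0 (Ioi 0)) (nhds xbar) := by
    have : Tendsto (fun ε : ℝ => xbar + ε) (nhds 0) (nhds (xbar + 0)) :=
      (continuous_const.add continuous_id).tendsto 0
    simpa using this.mono_left nhdsWithin_le_nhds
  have hmapne : Tendsto (fun ε : ℝ => xbar + ε) (nhdsWithin 0 (Ioi 0))
      (nhdsWithin xbar {xbar}ᶜ) := by
    apply tendsto_nhdsWithin_of_tendsto_nhds_of_eventually_within _ hmap0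
    filter_upwards [self_mem_nhdsWithin] with ε (hε : (0:ℝ) < ε)
    simp only [mem_compl_iff, mem_singleton_iff]
    intro h
    nlinarith [h]
  -- slope limit
  have hslope : Tendsto (fun ε => g (xbar + ε) / ε) (nhdsWithin 0 (Ioi 0))
      (nhds (deriv g xbar)) := by
    have h := hgdiff.hasDerivAt
    rw [hasDerivAt_iff_tendsto_slope] at h
    refine (h.comp hmapne).congr ?_
    intro ε
    simp [slope_def_field, hg0]
  -- inv limit
  have hinv : Tendsto (fun ε => (deriv (deriv v) (xbar + ε))⁻¹) (nhdsWithin 0 (Ioi 0))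
      (nhds ((deriv (deriv v) xbar)⁻¹)) :=
    ((hv2cont.tendsto.comp hmap0).inv₀ hv2pos.ne')
  -- eventually positive second derivative
  have hposev : ∀ᶠ ε in nhdsWithin 0 (Ioi 0), 0 < deriv (deriv v) (xbar + ε) :=
    hmap0.eventually (hv2cont.tendsto.eventually (eventually_gt_nhds hv2pos))
  -- eventual equality
  have hbeq : ∀ᶠ ε in nhdsWithin 0 (Ioi 0),
      (g (xbar + ε) / ε) * (deriv (deriv v) (xbar + ε))⁻¹ = b (xbar + ε) / ε := by
    have hsmall : Ioo (0:ℝ) δ₂ ∈ nhdsWithin (0:ℝ) (Ioi 0) := by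
      apply mem_nhdsWithin.mpr
      exact ⟨Iio δ₂, isOpen_Iio, hδ₂, fun x hx => ⟨hx.2, hx.1⟩⟩
    filter_upwards [hsmall, hposev] with ε hε hpos
    have hx : xbar + ε ∈ Icc xbar (xbar + δ₂) := ⟨by linarith [hε.1], by linarith [hε.2]⟩
    have hodex := hode _ hx
    have hmax : max (deriv (deriv v) (xbar + ε)) 0 = deriv (deriv v) (xbar + ε) :=
      max_eq_left hpos.le
    rw [hmax] at hodex
    have hb : b (xbar + ε) = g (xbar + ε) / deriv (deriv v) (xbar + ε) := by
      rw [eq_div_iff hpos.ne']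
      simp only [hg]
      linarith [hodex]
    rw [hb]
    field_simp
  have hfinal : Tendsto (fun ε => b (xbar + ε) / ε) (nhdsWithin 0 (Ioi 0))
      (nhds (deriv g xbar * (deriv (deriv v) xbar)⁻¹)) :=
    (hslope.mul hinv).congr' hbeq
  have hbb : Tendsto (fun ε => b (xbar + ε) / ε) (nhdsWithin 0 (Ioi 0)) atTop := by
    simpa [hbxbar] using hbblow
  exact not_tendsto_atTop_of_tendsto_nhds hfinal hbb
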